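/- For every d ≥ 1 and j ≥ 1, the number of connected induced subgraphs of the lattice Z^d with exactly j vertices that contain the origin is at most (2de)^j. -/

import Mathlib

open Finset

/-- The nearest-neighbour graph on `ℤ^d`: vertices adjacent iff ℓ¹-distance is 1. -/
def latticeGraph (d : ℕ) : SimpleGraph (Fin d → ℤ) where
  Adj x y := (∑ i, |x i - y i|) = 1
  symm := by
    constructor
    intro x y h
    rw [show (∑ i, |y i - x i|) = ∑ i, |x i - y i| from
      Finset.sum_congr rfl fun i _ => abs_sub_comm _ _]
    exact h
  loopless := by constructor; intro x h; simp at h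

/-- The unit vector in direction `a`: `+e_{a/2}` if `a` even, `-e_{a/2}` if odd. -/
def dirVec (d : ℕ) (a : Fin (2*d)) : Fin d → ℤ :=
  Pi.single ⟨a.val / 2, by have := a.isLt; omega⟩ (if a.val % 2 = 0 then 1 else -1)

lemma dirVec_apply (d : ℕ) (a : Fin (2*d)) (i : Fin d) :
    dirVec d a i = if (i : ℕ) = a.val / 2 then (if a.val % 2 = 0 then (1:ℤ) else -1) else 0 := by
  unfold dirVec
  rw [Pi.single_apply]
  simp [Fin.ext_iff]

lemma dirVec_injective (d : ℕ) : Function.Injective (dirVec d) := by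
  intro a b h
  have h1 := congrFun h ⟨a.val / 2, by have := a.isLt; omega⟩
  have h2 := congrFun h ⟨b.val / 2, by have := b.isLt; omega⟩
  rw [dirVec_apply, dirVec_apply] at h1 h2
  simp only [Fin.val_mk] at h1 h2
  apply Fin.ext
  rcases Nat.mod_two_eq_zero_or_one a.val with ha | ha <;>
    rcases Nat.mod_two_eq_zero_or_one b.val with hb | hb <;>
    by_cases hab : a.val / 2 = b.val / 2 <;>
    simp [ha, hb, hab] at h1 h2 ⊢ <;> omega

lemma adj_iff {d : ℕ} {x y : Fin d → ℤ} :
    (latticeGraph d).Adj x y ↔ ∃ a : Fin (2*d), y = x + dirVec d a := by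
  constructor
  · intro h
    change (∑ i, |x i - y i|) = 1 at h
    have hex : ∃ i₀, x i₀ ≠ y i₀ := by
      by_contra hc
      push_neg at hc
      rw [Finset.sum_eq_zero (fun i _ => by rw [hc i]; simp)] at h
      exact one_ne_zero h.symm
    obtain ⟨i₀, hi₀⟩ := hex
    have h1 : 1 ≤ |x i₀ - y i₀| := Int.one_le_abs (sub_ne_zero.2 hi₀)
    have hsum : |x i₀ - y i₀| + ∑ i ∈ univ.erase i₀, |x i - y i| = 1 := by
      have := Finset.add_sum_erase univ (fun i => |x i - y i|) (mem_univ i₀)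
      simpa [h] using this
    have hrest0 : 0 ≤ ∑ i ∈ univ.erase i₀, |x i - y i| :=
      Finset.sum_nonneg (fun i _ => abs_nonneg _)
    have hrest : ∑ i ∈ univ.erase i₀, |x i - y i| = 0 := by omega
    have hzero : ∀ i ∈ univ.erase i₀, |x i - y i| = 0 :=
      (Finset.sum_eq_zero_iff_of_nonneg (fun i _ => abs_nonneg _)).1 hrest
    have habs : |x i₀ - y i₀| = 1 := by omega
    have hother : ∀ i : Fin d, i ≠ i₀ → x i = y i := by
      intro i hi
      have := hzero i (Finset.mem_erase.2 ⟨hi, mem_univ i⟩)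
      simp only [abs_eq_zero, sub_eq_zero] at this
      exact this
    have hdiff : y i₀ - x i₀ = 1 ∨ y i₀ - x i₀ = -1 := by
      rcases abs_eq (by norm_num : (0:ℤ) ≤ 1) |>.1 habs with h' | h' <;> omega
    rcases hdiff with h' | h'
    · refine ⟨⟨2 * i₀.val, by have := i₀.isLt; omega⟩, ?_⟩
      funext i
      rw [Pi.add_apply, dirVec_apply]
      simp only [Fin.val_mk]
      by_cases hi : i = i₀
      · subst hi; rw [if_pos (by omega), if_pos (by omega)]; omega
      · rw [if_neg (by have : i₀.val ≠ i.val := fun hc => hi (Fin.ext hc.symm); omega)]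
        rw [hother i hi]; ring
    · refine ⟨⟨2 * i₀.val + 1, by have := i₀.isLt; omega⟩, ?_⟩
      funext i
      rw [Pi.add_apply, dirVec_apply]
      simp only [Fin.val_mk]
      by_cases hi : i = i₀
      · subst hi; rw [if_pos (by omega), if_neg (by omega)]; omega
      · rw [if_neg (by have : i₀.val ≠ i.val := fun hc => hi (Fin.ext hc.symm); omega)]
        rw [hother i hi]; ring
  · rintro ⟨a, rfl⟩
    change (∑ i, |x i - (x + dirVec d a) i|) = 1
    have hlt : a.val / 2 < d := by have := a.isLt; omega
    have step1 : ∀ i : Fin d, |x i - (x + dirVec d a) i| = if i = (⟨a.val/2, hlt⟩ : Fin d) then 1 else 0 := by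
      intro i
      rw [Pi.add_apply, dirVec_apply]
      by_cases hi : i = (⟨a.val/2, hlt⟩ : Fin d)
      · rw [if_pos hi, if_pos (by rw [hi])]
        split <;> simp
      · rw [if_neg hi, if_neg (fun hc => hi (Fin.ext hc))]
        simp
    rw [Finset.sum_congr rfl (fun i _ => step1 i), Finset.sum_ite_eq' univ _ (fun _ => (1:ℤ))]
    simp

variable {d : ℕ}

/-- Directions `a` such that `v + dirVec a` is a new vertex of `S` not yet in `L`. -/
noncomputable def childSet (d : ℕ) (S : Finset (Fin d → ℤ)) (L : List (Fin d → ℤ))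
    (v : Fin d → ℤ) : Finset (Fin (2*d)) :=
  Finset.univ.filter (fun a => v + dirVec d a ∈ S ∧ v + dirVec d a ∉ L)

/-- BFS exploration of `S` from the origin. -/
noncomputable def explore (d : ℕ) (S : Finset (Fin d → ℤ)) : ℕ → List (Fin d → ℤ)
  | 0 => [0]
  | (i+1) =>
      let L := explore d S i
      if h : i < L.length then
        L ++ (childSet d S L (L.get ⟨i, h⟩)).toList.map (fun a => L.get ⟨i, h⟩ + dirVec d a)
      else L

/-- The children-codes of the BFS exploration. -/
noncomputable def code (d : ℕ) (S : Finset (Fin d → ℤ)) (i : ℕ) : Finset (Fin (2*d)) :=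
  if h : i < (explore d S i).length then
    childSet d S (explore d S i) ((explore d S i).get ⟨i, h⟩)
  else ∅

/-- Replaying a code sequence. -/
noncomputable def decode (d : ℕ) (g : ℕ → Finset (Fin (2*d))) : ℕ → List (Fin d → ℤ)
  | 0 => [0]
  | (i+1) =>
      let L := decode d g i
      if h : i < L.length then
        L ++ (g i).toList.map (fun a => L.get ⟨i, h⟩ + dirVec d a)
      else L

lemma decode_code (S : Finset (Fin d → ℤ)) (i : ℕ) :
    decode d (code d S) i = explore d S i := by
  induction i with
  | zero => rfl
  | succ i ih =>
      rw [decode, explore, ih]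
      by_cases h : i < (explore d S i).length
      · rw [dif_pos h, dif_pos h, code, dif_pos h]
      · rw [dif_neg h, dif_neg h]

lemma explore_prefix_succ (S : Finset (Fin d → ℤ)) (i : ℕ) :
    explore d S i <+: explore d S (i+1) := by
  rw [explore]
  by_cases h : i < (explore d S i).length
  · rw [dif_pos h]; exact List.prefix_append _ _
  · rw [dif_neg h]

lemma explore_prefix (S : Finset (Fin d → ℤ)) {i k : ℕ} (h : i ≤ k) :
    explore d S i <+: explore d S k := by
  induction k with
  | zero => rw [Nat.le_zero.1 h]
  | succ k ih =>
      rcases Nat.lt_or_ge i (k+1) with h' | h'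
      · exact (ih (by omega)).trans (explore_prefix_succ S k)
      · rw [show i = k + 1 by omega]

lemma explore_subset (S : Finset (Fin d → ℤ)) (h0 : (0 : Fin d → ℤ) ∈ S) (i : ℕ) :
    ∀ x ∈ explore d S i, x ∈ S := by
  induction i with
  | zero => intro x hx; simp only [explore, List.mem_singleton] at hx; rwa [hx]
  | succ i ih =>
      intro x hx
      rw [explore] at hx
      by_cases h : i < (explore d S i).length
      · rw [dif_pos h, List.mem_append] at hx
        rcases hx with hx | hx
        · exact ih x hx
        · obtain ⟨a, ha, rfl⟩ := List.mem_map.1 hx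
          rw [Finset.mem_toList, childSet, Finset.mem_filter] at ha
          exact ha.2.1
      · rw [dif_neg h] at hx; exact ih x hx

lemma explore_nodup (S : Finset (Fin d → ℤ)) (i : ℕ) : (explore d S i).Nodup := by
  induction i with
  | zero => simp [explore]
  | succ i ih =>
      rw [explore]
      by_cases h : i < (explore d S i).length
      · rw [dif_pos h]
        refine List.Nodup.append ih ?_ ?_
        · refine (Finset.nodup_toList _).map ?_
          intro a b hab
          exact dirVec_injective d (add_left_cancel hab)
        · intro x hx hx'
          obtain ⟨a, ha, rfl⟩ := List.mem_map.1 hx'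
          rw [Finset.mem_toList, childSet, Finset.mem_filter] at ha
          exact ha.2.2 hx
      · rw [dif_neg h]; exact ih

lemma explore_length_succ (S : Finset (Fin d → ℤ)) (i : ℕ) :
    (explore d S (i+1)).length = (explore d S i).length + (code d S i).card := by
  rw [explore, code]
  by_cases h : i < (explore d S i).length
  · rw [dif_pos h, dif_pos h]
    simp [Finset.length_toList]
  · rw [dif_neg h, dif_neg h]; simp

lemma explore_stab (S : Finset (Fin d → ℤ)) {i k : ℕ}
    (h : (explore d S i).length ≤ i) (hk : i ≤ k) : explore d S k = explore d S i := by
  induction k with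
  | zero => rw [Nat.le_zero.1 hk]
  | succ k ih =>
      rcases Nat.lt_or_ge i (k+1) with h' | h'
      · have hik : i ≤ k := by omega
        have hk' := ih hik
        rw [explore, hk', dif_neg (by omega)]
      · rw [show i = k + 1 by omega]

lemma explore_length_le (S : Finset (Fin d → ℤ)) (h0 : (0 : Fin d → ℤ) ∈ S) (i : ℕ) :
    (explore d S i).length ≤ S.card := by
  classical
  have h1 : (explore d S i).toFinset ⊆ S := by
    intro x hx
    exact explore_subset S h0 i x (List.mem_toFinset.1 hx)
  calc (explore d S i).length = (explore d S i).toFinset.card :=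
        (List.toFinset_card_of_nodup (explore_nodup S i)).symm
    _ ≤ S.card := Finset.card_le_card h1

lemma explore_closure (S : Finset (Fin d → ℤ)) (h0 : (0 : Fin d → ℤ) ∈ S)
    {v : Fin d → ℤ} (hv : v ∈ explore d S S.card) (a : Fin (2*d))
    (ha : v + dirVec d a ∈ S) : v + dirVec d a ∈ explore d S S.card := by
  classical
  obtain ⟨n, hn⟩ := List.get_of_mem hv
  have hnj : (n : ℕ) < S.card := lt_of_lt_of_le n.isLt (explore_length_le S h0 S.card)
  -- the index n is processed: n < length of explore at time n
  have hproc : (n : ℕ) < (explore d S n).length := by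
    by_contra hc
    push_neg at hc
    have hstab := explore_stab S hc (le_of_lt hnj)
    have h2 := congrArg List.length hstab
    have := n.isLt
    omega
  -- the vertex at index n at time n is v
  have hpre := explore_prefix S (le_of_lt hnj)
  have hgetv : (explore d S n).get ⟨(n : ℕ), hproc⟩ = v :=
    (hpre.getElem hproc).trans hn
  by_cases hmem : v + dirVec d a ∈ explore d S n
  · exact hpre.subset hmem
  · have hchild : a ∈ childSet d S (explore d S n) v := by
      rw [childSet, Finset.mem_filter]
      exact ⟨Finset.mem_univ a, ha, hmem⟩
    have hstep : v + dirVec d a ∈ explore d S (n + 1) := by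
      rw [explore, dif_pos hproc, List.mem_append]
      right
      rw [hgetv]
      exact List.mem_map.2 ⟨a, Finset.mem_toList.2 hchild, rfl⟩
    exact (explore_prefix S (by omega : (n : ℕ) + 1 ≤ S.card)).subset hstep

lemma zero_mem_explore (S : Finset (Fin d → ℤ)) (i : ℕ) :
    (0 : Fin d → ℤ) ∈ explore d S i := by
  have : (0 : Fin d → ℤ) ∈ explore d S 0 := by simp [explore]
  exact (explore_prefix S (Nat.zero_le i)).subset this

lemma explore_complete (S : Finset (Fin d → ℤ)) (h0 : (0 : Fin d → ℤ) ∈ S)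
    (hconn : ((latticeGraph d).induce (↑S : Set (Fin d → ℤ))).Connected) :
    ∀ w ∈ S, w ∈ explore d S S.card := by
  intro w hw
  have hreach := hconn.preconnected ⟨(0 : Fin d → ℤ), h0⟩ ⟨w, hw⟩
  obtain ⟨p⟩ := hreach
  have key : ∀ (u v : (↑S : Set (Fin d → ℤ))), ((latticeGraph d).induce ↑S).Walk u v →
      (u : Fin d → ℤ) ∈ explore d S S.card → (v : Fin d → ℤ) ∈ explore d S S.card := by
    intro u v p
    induction p with
    | nil => exact fun h => h
    | cons hadj p ih =>
        intro hu
        rename_i x y z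
        apply ih
        have hxy : (latticeGraph d).Adj (x : Fin d → ℤ) (y : Fin d → ℤ) := hadj
        obtain ⟨a, hay⟩ := adj_iff.1 hxy
        have := explore_closure S h0 hu a (hay ▸ y.2)
        rwa [← hay] at this
  exact key _ _ p (zero_mem_explore S _)

lemma explore_toFinset (S : Finset (Fin d → ℤ)) (h0 : (0 : Fin d → ℤ) ∈ S)
    (hconn : ((latticeGraph d).induce (↑S : Set (Fin d → ℤ))).Connected) :
    (explore d S S.card).toFinset = S := by
  classical
  apply Finset.Subset.antisymm
  · intro x hx
    exact explore_subset S h0 _ x (List.mem_toFinset.1 hx)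
  · intro x hx
    exact List.mem_toFinset.2 (explore_complete S h0 hconn x hx)

lemma explore_length_final (S : Finset (Fin d → ℤ)) (h0 : (0 : Fin d → ℤ) ∈ S)
    (hconn : ((latticeGraph d).induce (↑S : Set (Fin d → ℤ))).Connected) :
    (explore d S S.card).length = S.card := by
  classical
  conv_rhs => rw [← explore_toFinset S h0 hconn]
  rw [List.toFinset_card_of_nodup (explore_nodup S _)]

lemma explore_length_eq_sum (S : Finset (Fin d → ℤ)) (k : ℕ) :
    (explore d S k).length = 1 + ∑ i ∈ Finset.range k, (code d S i).card := by
  induction k with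
  | zero => simp [explore]
  | succ k ih => rw [explore_length_succ, ih, Finset.sum_range_succ]; ring

lemma sum_code (S : Finset (Fin d → ℤ)) (h0 : (0 : Fin d → ℤ) ∈ S)
    (hconn : ((latticeGraph d).induce (↑S : Set (Fin d → ℤ))).Connected) :
    1 + ∑ i ∈ Finset.range S.card, (code d S i).card = S.card := by
  rw [← explore_length_eq_sum, explore_length_final S h0 hconn]

lemma code_eq_empty (S : Finset (Fin d → ℤ)) (h0 : (0 : Fin d → ℤ) ∈ S) {n : ℕ}
    (hn : S.card ≤ n) : code d S n = ∅ := by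
  rw [code, dif_neg]
  push_neg
  exact le_trans (explore_length_le S h0 n) hn

/-- The encoding of a lattice animal as a set of (index, direction) pairs. -/
noncomputable def encodeFinset (d j : ℕ) (S : Finset (Fin d → ℤ)) :
    Finset ((_ : Fin j) × Fin (2*d)) :=
  (Finset.univ : Finset (Fin j)).sigma (fun i => code d S i.val)

lemma encodeFinset_card {j : ℕ} (S : Finset (Fin d → ℤ)) (h0 : (0 : Fin d → ℤ) ∈ S)
    (hcard : S.card = j)
    (hconn : ((latticeGraph d).induce (↑S : Set (Fin d → ℤ))).Connected) :
    (encodeFinset d j S).card = j - 1 := by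
  rw [encodeFinset, Finset.card_sigma]
  have h1 : ∑ i : Fin j, (code d S (i : ℕ)).card = ∑ i ∈ Finset.range j, (code d S i).card :=
    Fin.sum_univ_eq_sum_range (fun i => (code d S i).card) j
  have h2 := sum_code S h0 hconn
  rw [hcard] at h2
  omega

lemma encode_inj {j : ℕ} {S S' : Finset (Fin d → ℤ)}
    (h0 : (0 : Fin d → ℤ) ∈ S) (hcard : S.card = j)
    (hconn : ((latticeGraph d).induce (↑S : Set (Fin d → ℤ))).Connected)
    (h0' : (0 : Fin d → ℤ) ∈ S') (hcard' : S'.card = j)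
    (hconn' : ((latticeGraph d).induce (↑S' : Set (Fin d → ℤ))).Connected)
    (h : encodeFinset d j S = encodeFinset d j S') : S = S' := by
  classical
  have hcode : ∀ n : ℕ, code d S n = code d S' n := by
    intro n
    rcases Nat.lt_or_ge n j with hn | hn
    · ext a
      have := Finset.ext_iff.1 h ⟨⟨n, hn⟩, a⟩
      simpa [encodeFinset, Finset.mem_sigma] using this
    · rw [code_eq_empty S h0 (by omega), code_eq_empty S' h0' (by omega)]
  have hexp : ∀ k, explore d S k = explore d S' k := by
    intro k
    rw [← decode_code S k, ← decode_code S' k]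
    congr 1
    exact funext hcode
  have := explore_toFinset S h0 hconn
  rw [hcard, hexp, ← hcard', explore_toFinset S' h0' hconn'] at this
  exact this.symm

lemma pow_self_le_exp_mul_factorial (n : ℕ) :
    (n : ℝ) ^ n ≤ Real.exp 1 ^ n * (Nat.factorial n : ℝ) := by
  induction n with
  | zero => simp
  | succ n ih =>
      have he : (1:ℝ) ≤ Real.exp 1 := by
        have := Real.add_one_le_exp (1:ℝ); linarith
      have key : ((n:ℝ)+1)^n ≤ Real.exp 1 * (n:ℝ)^n := by
        rcases Nat.eq_zero_or_pos n with rfl | hn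
        · simpa using he
        · have hn0 : (0:ℝ) < n := Nat.cast_pos.2 hn
          have h1 : (n:ℝ)+1 ≤ (n:ℝ) * Real.exp (1/(n:ℝ)) := by
            have h2 := Real.add_one_le_exp (1/(n:ℝ))
            have h3 : (n:ℝ) * (1/(n:ℝ) + 1) ≤ (n:ℝ) * Real.exp (1/(n:ℝ)) :=
              mul_le_mul_of_nonneg_left h2 hn0.le
            calc (n:ℝ)+1 = (n:ℝ) * (1/(n:ℝ) + 1) := by field_simp; ring
              _ ≤ _ := h3
          calc ((n:ℝ)+1)^n ≤ ((n:ℝ) * Real.exp (1/(n:ℝ)))^n := by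
                apply pow_le_pow_left₀ (by positivity) h1
            _ = (n:ℝ)^n * Real.exp (1/(n:ℝ))^n := mul_pow _ _ _
            _ = (n:ℝ)^n * Real.exp 1 := by
                rw [← Real.exp_nat_mul]
                congr 1
                field_simp
            _ = Real.exp 1 * (n:ℝ)^n := mul_comm _ _
      have hfac : ((Nat.factorial (n+1) : ℕ):ℝ) = ((n:ℝ)+1) * (Nat.factorial n : ℝ) := by
        rw [Nat.factorial_succ]; push_cast; ring
      have hnn : (0:ℝ) ≤ (n:ℝ)+1 := by positivity
      calc ((n+1:ℕ):ℝ)^(n+1) = ((n:ℝ)+1)^n * ((n:ℝ)+1) := by push_cast; ring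
        _ ≤ (Real.exp 1 * (n:ℝ)^n) * ((n:ℝ)+1) := mul_le_mul_of_nonneg_right key hnn
        _ ≤ (Real.exp 1 * (Real.exp 1 ^ n * (Nat.factorial n : ℝ))) * ((n:ℝ)+1) := by
            have h4 := mul_le_mul_of_nonneg_left ih (Real.exp_pos 1).le
            exact mul_le_mul_of_nonneg_right h4 hnn
        _ = Real.exp 1 ^ (n+1) * (Nat.factorial (n+1) : ℝ) := by rw [hfac]; ring

/-- the number of connected (induced) subgraphs of `ℤ^d` with exactly `j`
vertices containing the origin is at most `(2de)^j`. -/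
theorem card_connected_subgraphs_le
    (d j : ℕ) (hd : 1 ≤ d) (hj : 1 ≤ j) :
    {S : Finset (Fin d → ℤ) | 0 ∈ S ∧ S.card = j ∧
        ((latticeGraph d).induce (↑S : Set (Fin d → ℤ))).Connected}.Finite ∧
    ({S : Finset (Fin d → ℤ) | 0 ∈ S ∧ S.card = j ∧
        ((latticeGraph d).induce (↑S : Set (Fin d → ℤ))).Connected}.ncard : ℝ) ≤
      (2 * d * Real.exp 1) ^ j := by
  classical
  set A := {S : Finset (Fin d → ℤ) | 0 ∈ S ∧ S.card = j ∧
      ((latticeGraph d).induce (↑S : Set (Fin d → ℤ))).Connected} with hA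
  set T : Finset (Finset ((_ : Fin j) × Fin (2*d))) := Finset.powersetCard (j-1) (Finset.univ : Finset ((_ : Fin j) × Fin (2*d))) with hTdef
  have hmap : ∀ S ∈ A, encodeFinset d j S ∈ T := by
    rintro S ⟨h0, hcard, hconn⟩
    rw [hTdef, Finset.mem_powersetCard]
    exact ⟨Finset.subset_univ _, encodeFinset_card S h0 hcard hconn⟩
  have hinj : Set.InjOn (encodeFinset d j) A := by
    rintro S ⟨h0, hcard, hconn⟩ S' ⟨h0', hcard', hconn'⟩ h
    exact encode_inj h0 hcard hconn h0' hcard' hconn' h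
  have hfin : A.Finite := by
    apply Set.Finite.of_finite_image _ hinj
    exact Set.Finite.subset T.finite_toSet (by rintro _ ⟨S, hS, rfl⟩; exact hmap S hS)
  refine ⟨hfin, ?_⟩
  have hcardle : A.ncard ≤ T.card := by
    have := Set.ncard_le_ncard_of_injOn (t := (↑T : Set (Finset ((_ : Fin j) × Fin (2*d))))) (encodeFinset d j) hmap hinj T.finite_toSet
    rwa [Set.ncard_coe_finset] at this
  have hT : T.card = (2*d*j).choose (j-1) := by
    rw [hTdef, Finset.card_powersetCard, Finset.card_univ]
    congr 1
    simp [mul_comm]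
  -- now the numeric chain
  have hfj : (0:ℝ) < (Nat.factorial j : ℝ) := by positivity
  have step1 : (2*d*j).choose (j-1) ≤ (2*d*j).choose j := by
    have hhalf : j - 1 < (2*d*j) / 2 := by
      have h2 : (2*d*j) / 2 = d * j := by
        rw [show 2*d*j = 2*(d*j) by ring, Nat.mul_div_cancel_left _ (by norm_num)]
      have h3 : j ≤ d * j := Nat.le_mul_of_pos_left j (by omega)
      omega
    have := Nat.choose_le_succ_of_lt_half_left hhalf
    rwa [show j - 1 + 1 = j by omega] at this
  have step2 : ((2*d*j).choose j : ℝ) ≤ ((2*d*j : ℕ):ℝ)^j / (Nat.factorial j : ℝ) :=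
    Nat.choose_le_pow_div j (2*d*j)
  have step3 : ((2*d*j : ℕ):ℝ)^j / (Nat.factorial j : ℝ) ≤ (2 * d * Real.exp 1) ^ j := by
    rw [div_le_iff₀ hfj]
    have hexp : ((j:ℝ))^j ≤ Real.exp 1 ^ j * (Nat.factorial j : ℝ) :=
      pow_self_le_exp_mul_factorial j
    have hpos : (0:ℝ) ≤ ((2*d:ℕ):ℝ)^j := by positivity
    calc ((2*d*j : ℕ):ℝ)^j = ((2*d:ℕ):ℝ)^j * ((j:ℝ))^j := by push_cast; ring
      _ ≤ ((2*d:ℕ):ℝ)^j * (Real.exp 1 ^ j * (Nat.factorial j : ℝ)) :=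
          mul_le_mul_of_nonneg_left hexp hpos
      _ = (2 * d * Real.exp 1) ^ j * (Nat.factorial j : ℝ) := by
          push_cast; rw [mul_pow]; ring
  calc (A.ncard : ℝ) ≤ ((2*d*j).choose (j-1) : ℝ) := by
        rw [← hT]; exact_mod_cast hcardle
    _ ≤ ((2*d*j).choose j : ℝ) := by exact_mod_cast step1
    _ ≤ ((2*d*j : ℕ):ℝ)^j / (Nat.factorial j : ℝ) := step2
    _ ≤ (2 * d * Real.exp 1) ^ j := step3
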